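/- Consider Algorithm 1 (locally privatized WMA) with hypothesis class F = {f_1,...,f_K} (K ≥ 2), horizon T > log K, privacy parameters ε > 0, δ ∈ (0,1), and parameter γ > 0. Let b = (2√(2K ln(1/δ)) + √(Kε))·log(KT)/ε be the Laplace scale, c'(γ) = b·(γ + log K + log T), and c(γ) = 1/(log(KT) + 2c'(γ)). Fix any f = f_{j*} ∈ F and any features x^T ∈ X^T, and assume the clipping bounds 1/(TKM) ≤ p̄_{t,j}[y'] ≤ 1/M hold for all t, j, y'. Then the event E = { |Lap^t_j| ≤ c'(γ) for all t ∈ [T], j ∈ [K] } has probability at least 1 − e^{−γ}, and on E the predictions p̂_t of Algorithm 1 satisfy E_{Y'^T}[ ∑_{t=1}^T KL(f(x_t), p̂_t) ] ≤ (1/c(γ))·√(2T log K) + 3·log(KT) + ∑_{t=1}^T ∑_{j=1}^K E_{Y'^T}[w̃^t_j]·Lap^t_j − ∑_{t=1}^T Lap^t_{j*}, where the expectation E_{Y'^T} is over the labels Y_t ~ f(x_t) and the clipping randomness (Y'_t = h_t(Y_t) ~ h_t∘f(x_t)), holding the Laplace values fixed. -/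

import Mathlib

open MeasureTheory ENNReal Finset

/-- `p` is a probability distribution on the finite set `Fin M`. -/
def IsDist {M : ℕ} (p : Fin M → ℝ) : Prop :=
  (∀ y, 0 ≤ p y) ∧ ∑ y, p y = 1

/-- The Laplace distribution on `ℝ` with scale `b`, i.e. the measure with density
`x ↦ (1/(2b)) · exp(−|x|/b)` with respect to Lebesgue measure. -/
noncomputable def laplaceMeasure (b : ℝ) : Measure ℝ :=
  MeasureTheory.volume.withDensity fun x =>
    ENNReal.ofReal ((1 / (2 * b)) * Real.exp (-|x| / b))

lemma exp_neg_le_quad {x : ℝ} (hx : 0 ≤ x) : Real.exp (-x) ≤ 1 - x + x^2/2 := by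
  have hd : ∀ y : ℝ, HasDerivAt (fun z : ℝ => 1 - z + z^2/2 - Real.exp (-z))
      (y - 1 + Real.exp (-y)) y := by
    intro y
    have h1 : HasDerivAt (fun z : ℝ => Real.exp (-z)) (-Real.exp (-y)) y := by
      simpa using (hasDerivAt_neg y).exp
    have h2 : HasDerivAt (fun z : ℝ => 1 - z + z^2/2) (-1 + y) y := by
      have h3 := ((hasDerivAt_pow 2 y).div_const 2)
      have h4 := ((hasDerivAt_const y (1:ℝ)).sub (hasDerivAt_id y)).add h3
      refine h4.congr_deriv ?_
      simp
    have := h2.sub h1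
    refine this.congr_deriv ?_
    ring
  have hmono : Monotone (fun z : ℝ => 1 - z + z^2/2 - Real.exp (-z)) := by
    apply monotone_of_deriv_nonneg (fun y => (hd y).differentiableAt)
    intro y
    rw [(hd y).deriv]
    have := Real.add_one_le_exp (-y)
    linarith
  have := hmono hx
  norm_num at this
  linarith [this]

lemma jensen_log {ι : Type*} (s : Finset ι) (w p : ι → ℝ) (h0 : ∀ i ∈ s, 0 ≤ w i)
    (h1 : ∑ i ∈ s, w i = 1) (hp : ∀ i ∈ s, 0 < p i) :
    ∑ i ∈ s, w i * Real.log (p i) ≤ Real.log (∑ i ∈ s, w i * p i) := by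
  have hconc : ConcaveOn ℝ (Set.Ioi 0) Real.log := strictConcaveOn_log_Ioi.concaveOn
  have := hconc.le_map_sum h0 h1 (fun i hi => hp i hi)
  simpa using this

lemma Tlog_bound (T : ℕ) (hT : 2 ≤ T) :
    (T:ℝ) * Real.log ((T:ℝ)/((T:ℝ)-1)) ≤ 2 * Real.log 2 := by
  have hT1 : (1:ℝ) < T := by exact_mod_cast hT
  have hlog4 : Real.log 4 = 2 * Real.log 2 := by
    rw [show (4:ℝ) = 2^(2:ℕ) by norm_num, Real.log_pow]; norm_num
  rcases eq_or_lt_of_le hT with h2 | h3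
  · subst h2
    push_cast
    norm_num
  rcases eq_or_lt_of_le (Nat.succ_le_of_lt h3) with h3' | h4
  · subst h3'
    push_cast
    norm_num
    have e1 : (3:ℝ) * Real.log (3/2) = Real.log (((3:ℝ)/2)^(3:ℕ)) := by
      rw [Real.log_pow]; push_cast; ring
    rw [e1, ← hlog4]
    apply Real.log_le_log (by positivity)
    norm_num
  · have hT4 : (4:ℝ) ≤ T := by exact_mod_cast h4
    have hpos : (0:ℝ) < (T:ℝ)/((T:ℝ)-1) := div_pos (by linarith) (by linarith)
    have hlog : Real.log ((T:ℝ)/((T:ℝ)-1)) ≤ (T:ℝ)/((T:ℝ)-1) - 1 := by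
      have := Real.log_le_sub_one_of_pos hpos
      linarith
    have hne : (T:ℝ) - 1 ≠ 0 := by linarith
    have he : (T:ℝ)/((T:ℝ)-1) - 1 = 1/((T:ℝ)-1) := by
      field_simp
      ring
    rw [he] at hlog
    have h5 : (T:ℝ) * Real.log ((T:ℝ)/((T:ℝ)-1)) ≤ (T:ℝ)/((T:ℝ)-1) := by
      have := mul_le_mul_of_nonneg_left hlog (by linarith : (0:ℝ) ≤ T)
      calc (T:ℝ) * Real.log ((T:ℝ)/((T:ℝ)-1)) ≤ (T:ℝ) * (1/((T:ℝ)-1)) := this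
      _ = (T:ℝ)/((T:ℝ)-1) := by ring
    have h6 : (T:ℝ)/((T:ℝ)-1) ≤ 4/3 := by
      rw [div_le_div_iff₀ (by linarith) (by norm_num)]
      linarith
    have h7 : (4:ℝ)/3 ≤ 2 * Real.log 2 := by
      have := Real.log_two_gt_d9
      linarith
    linarith

lemma laplace_cont (b : ℝ) : Continuous (fun x : ℝ => (1 / (2 * b)) * Real.exp (-|x| / b)) := by
  fun_prop

lemma laplace_Icc (b a : ℝ) (hb : 0 < b) (ha : 0 ≤ a) :
    laplaceMeasure b (Set.Icc (-a) a) = ENNReal.ofReal (1 - Real.exp (-a / b)) := by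
  have hcont := laplace_cont b
  rw [laplaceMeasure, withDensity_apply _ measurableSet_Icc]
  rw [← ofReal_integral_eq_lintegral_ofReal (hcont.integrableOn_Icc)
    (Filter.Eventually.of_forall fun x => by positivity)]
  congr 1
  rw [MeasureTheory.integral_Icc_eq_integral_Ioc,
    ← intervalIntegral.integral_of_le (by linarith : -a ≤ a)]
  have h1 : ∀ x : ℝ, HasDerivAt (fun y : ℝ => -(1/2) * Real.exp (-y / b))
      ((1 / (2 * b)) * Real.exp (-x / b)) x := by
    intro x
    have : HasDerivAt (fun y : ℝ => -y / b) (-(1:ℝ)/b) x := by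
      simpa using ((hasDerivAt_id x).neg.div_const b)
    have := (this.exp).const_mul (-(1/2) : ℝ)
    refine this.congr_deriv ?_
    ring
  have h2 : ∀ x : ℝ, HasDerivAt (fun y : ℝ => (1/2) * Real.exp (y / b))
      ((1 / (2 * b)) * Real.exp (x / b)) x := by
    intro x
    have : HasDerivAt (fun y : ℝ => y / b) ((1:ℝ)/b) x := by
      simpa using ((hasDerivAt_id x).div_const b)
    have := (this.exp).const_mul ((1/2) : ℝ)
    refine this.congr_deriv ?_
    ring
  rw [← intervalIntegral.integral_add_adjacent_intervals (a := -a) (b := 0) (c := a)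
    (hcont.intervalIntegrable _ _) (hcont.intervalIntegrable _ _)]
  have e1 : (∫ x in (-a : ℝ)..0, (1 / (2 * b)) * Real.exp (-|x| / b))
      = ∫ x in (-a : ℝ)..0, (1 / (2 * b)) * Real.exp (x / b) := by
    apply intervalIntegral.integral_congr
    intro x hx
    rw [Set.uIcc_of_le (by linarith : -a ≤ (0:ℝ))] at hx
    have h : |x| = -x := abs_of_nonpos hx.2
    simp only [h, neg_neg]
  have e2 : (∫ x in (0 : ℝ)..a, (1 / (2 * b)) * Real.exp (-|x| / b))
      = ∫ x in (0 : ℝ)..a, (1 / (2 * b)) * Real.exp (-x / b) := by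
    apply intervalIntegral.integral_congr
    intro x hx
    rw [Set.uIcc_of_le ha] at hx
    simp only [abs_of_nonneg hx.1]
  rw [e1, e2]
  rw [intervalIntegral.integral_eq_sub_of_hasDerivAt (fun x _ => h2 x)
    ((by fun_prop : Continuous fun x : ℝ => (1 / (2 * b)) * Real.exp (x / b)).intervalIntegrable _ _),
    intervalIntegral.integral_eq_sub_of_hasDerivAt (fun x _ => h1 x)
    ((by fun_prop : Continuous fun x : ℝ => (1 / (2 * b)) * Real.exp (-x / b)).intervalIntegrable _ _)]
  simp only [neg_div, zero_div, Real.exp_zero, neg_zero]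
  ring_nf

lemma part_a (T K : ℕ) (hT : 1 ≤ T) (hK : 1 ≤ K) (b c' γ : ℝ) (hb : 0 < b) (hγ : 0 < γ)
    (hc' : c' = b * (γ + Real.log K + Real.log T)) :
    (1 : ℝ≥0∞) - ENNReal.ofReal (Real.exp (-γ)) ≤
      (Measure.pi fun _ : Fin T × Fin K => laplaceMeasure b)
        {L : Fin T × Fin K → ℝ | ∀ p, |L p| ≤ c'} := by
  have hKpos : (0:ℝ) < K := by exact_mod_cast hK
  have hK1 : (1:ℝ) ≤ K := by exact_mod_cast hK
  have hT1 : (1:ℝ) ≤ T := by exact_mod_cast hT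
  have hTpos : (0:ℝ) < T := by exact_mod_cast hT
  have hlogK : 0 ≤ Real.log K := Real.log_nonneg (by exact_mod_cast hK)
  have hlogT : 0 ≤ Real.log T := Real.log_nonneg (by exact_mod_cast hT)
  have hc'nn : 0 ≤ c' := by rw [hc']; positivity
  have hset : {L : Fin T × Fin K → ℝ | ∀ p, |L p| ≤ c'} =
      Set.univ.pi fun _ : Fin T × Fin K => Set.Icc (-c') c' := by
    ext L
    simp only [Set.mem_setOf_eq, Set.mem_univ_pi, Set.mem_Icc, abs_le]
  haveI : SigmaFinite (laplaceMeasure b) := by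
    unfold laplaceMeasure; infer_instance
  rw [hset, Measure.pi_pi, laplace_Icc b c' hb hc'nn, Finset.prod_const, Finset.card_univ,
    Fintype.card_prod, Fintype.card_fin, Fintype.card_fin]
  have hq : Real.exp (-c' / b) = Real.exp (-γ) / ((K : ℝ) * T) := by
    have h1 : -c' / b = -(γ + Real.log K + Real.log T) := by
      rw [hc']; field_simp
    rw [h1, neg_add, neg_add, Real.exp_add, Real.exp_add, Real.exp_neg (Real.log _),
      Real.exp_neg (Real.log _), Real.exp_log hKpos, Real.exp_log hTpos]
    ring
  rw [hq]
  set q : ℝ := Real.exp (-γ) / ((K : ℝ) * T) with hqdef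
  have hqnn : 0 ≤ q := by positivity
  have hq1 : q ≤ 1 := by
    rw [hqdef, div_le_one (by positivity)]
    calc Real.exp (-γ) ≤ 1 := Real.exp_le_one_iff.mpr (by linarith)
    _ ≤ (K:ℝ) * T := by nlinarith [hK1, hT1]
  rw [← ENNReal.ofReal_pow (by linarith : (0:ℝ) ≤ 1 - q)]
  have key : 1 - Real.exp (-γ) ≤ (1 - q) ^ (T * K) := by
    have h2 := one_add_mul_le_pow (a := -q) (by linarith) (T * K)
    have h3 : ((T * K : ℕ) : ℝ) * q = Real.exp (-γ) := by
      push_cast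
      rw [hqdef]
      field_simp
    calc 1 - Real.exp (-γ) = 1 + ((T * K : ℕ) : ℝ) * (-q) := by rw [mul_neg, h3]; ring
    _ ≤ (1 + -q) ^ (T * K) := h2
    _ = (1 - q) ^ (T * K) := by ring_nf
  calc (1 : ℝ≥0∞) - ENNReal.ofReal (Real.exp (-γ))
      = ENNReal.ofReal (1 - Real.exp (-γ)) := by
        rw [ENNReal.ofReal_sub _ (Real.exp_pos _).le, ENNReal.ofReal_one]
  _ ≤ ENNReal.ofReal ((1 - q) ^ (T * K)) := ENNReal.ofReal_le_ofReal key

lemma regret_core (K T : ℕ) (hK : 2 ≤ K) (hT : Real.log K < T) (η : ℝ)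
    (hη : η = Real.sqrt (2 * Real.log K / T))
    (L : Fin T → Fin K → ℝ) (hL0 : ∀ t j, 0 ≤ L t j) (hL1 : ∀ t j, L t j ≤ 1)
    (w : ℕ → Fin K → ℝ) (hw0 : ∀ j, w 0 j = 1)
    (hrec : ∀ (t : Fin T) (j : Fin K), w (t.1 + 1) j = w t.1 j * Real.exp (-η * L t j))
    (jstar : Fin K) :
    ∑ t, (∑ j, (w t.1 j / ∑ i, w t.1 i) * L t j) ≤
      ∑ t, L t jstar + Real.sqrt (2 * T * Real.log K) := by
  haveI : Nonempty (Fin K) := ⟨⟨0, by omega⟩⟩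
  have hlogK : 0 < Real.log K := by
    apply Real.log_pos; exact_mod_cast hK
  have hTpos : (0:ℝ) < T := lt_trans hlogK hT
  have hTnat : 0 < T := by exact_mod_cast hTpos
  set s : ℝ := Real.sqrt (2 * T * Real.log K) with hsdef
  have hprod : (0:ℝ) < 2 * T * Real.log K := by positivity
  have hs2 : s ^ 2 = 2 * T * Real.log K := Real.sq_sqrt hprod.le
  have hspos : 0 < s := Real.sqrt_pos.mpr hprod
  have hηs : η = s / T := by
    rw [hη, hsdef, show 2 * Real.log K / (T:ℝ) = (2 * T * Real.log K) / ((T:ℝ))^2 by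
      field_simp, Real.sqrt_div hprod.le, Real.sqrt_sq hTpos.le]
  have hηpos : 0 < η := by rw [hηs]; positivity
  -- positivity of weights
  have hwpos : ∀ n, n ≤ T → ∀ j, 0 < w n j := by
    intro n
    induction n with
    | zero => intro _ j; rw [hw0]; norm_num
    | succ n ih =>
      intro h j
      have hn : n < T := Nat.lt_of_succ_le h
      rw [hrec ⟨n, hn⟩ j]
      exact mul_pos (ih (le_of_lt hn) j) (Real.exp_pos _)
  have hZpos : ∀ n, n ≤ T → 0 < ∑ i, w n i :=
    fun n hn => Finset.sum_pos (fun i _ => hwpos n hn i) Finset.univ_nonempty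
  have hwsum : ∀ n, n ≤ T → ∑ j, w n j / ∑ i, w n i = 1 := by
    intro n hn
    rw [← Finset.sum_div, div_self (ne_of_gt (hZpos n hn))]
  -- filter lemmas
  have hfilter : ∀ n (hn : n < T), Finset.univ.filter (fun t : Fin T => t.1 < n + 1)
      = insert ⟨n, hn⟩ (Finset.univ.filter (fun t : Fin T => t.1 < n)) := by
    intro n hn
    ext u
    simp only [Finset.mem_filter, Finset.mem_univ, true_and, Finset.mem_insert, Fin.ext_iff]
    omega
  have hnotmem : ∀ n (hn : n < T), (⟨n, hn⟩ : Fin T) ∉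
      Finset.univ.filter (fun t : Fin T => t.1 < n) := by
    intro n hn
    simp
  have hfT : Finset.univ.filter (fun t : Fin T => t.1 < T) = Finset.univ := by
    ext u; simp [u.isLt]
  -- upper bound on log Z_n
  have hup : ∀ n, n ≤ T → Real.log (∑ j, w n j) ≤ Real.log K +
      ∑ t ∈ Finset.univ.filter (fun t : Fin T => t.1 < n),
        (-η * (∑ j, (w t.1 j / ∑ i, w t.1 i) * L t j) + η^2/2) := by
    intro n
    induction n with
    | zero =>
      intro _
      simp only [Nat.not_lt_zero, Finset.filter_false]
      simp [hw0, Finset.sum_const]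
    | succ n ih =>
      intro h
      have hn : n < T := Nat.lt_of_succ_le h
      have hZn := hZpos n (le_of_lt hn)
      set t₀ : Fin T := ⟨n, hn⟩
      have step : Real.log (∑ j, w (n+1) j) ≤ Real.log (∑ j, w n j) +
          (-η * (∑ j, (w n j / ∑ i, w n i) * L t₀ j) + η^2/2) := by
        have e1 : ∑ j, w (n+1) j = (∑ i, w n i) * ∑ j, (w n j / ∑ i, w n i) *
            Real.exp (-η * L t₀ j) := by
          rw [Finset.mul_sum]
          apply Finset.sum_congr rfl
          intro j _
          rw [hrec t₀ j]
          field_simp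
          rfl
        have hpos2 : 0 < ∑ j, (w n j / ∑ i, w n i) * Real.exp (-η * L t₀ j) :=
          Finset.sum_pos (fun j _ => mul_pos (div_pos (hwpos n hn.le j) hZn)
            (Real.exp_pos _)) Finset.univ_nonempty
        have hbound : ∑ j, (w n j / ∑ i, w n i) * Real.exp (-η * L t₀ j) ≤
            1 - η * (∑ j, (w n j / ∑ i, w n i) * L t₀ j) + η^2/2 := by
          have hle : ∀ j, Real.exp (-η * L t₀ j) ≤ 1 - η * L t₀ j + η^2/2 := by
            intro j
            have h1 : Real.exp (-(η * L t₀ j)) ≤ 1 - η * L t₀ j + (η * L t₀ j)^2/2 :=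
              exp_neg_le_quad (mul_nonneg hηpos.le (hL0 t₀ j))
            have h2 : (η * L t₀ j)^2 ≤ η^2 := by
              have ha := hL1 t₀ j
              have hb := hL0 t₀ j
              have h4 : L t₀ j^2 ≤ 1 := by nlinarith
              calc (η * L t₀ j)^2 = η^2 * L t₀ j^2 := by ring
              _ ≤ η^2 * 1 := by nlinarith [sq_nonneg η]
              _ = η^2 := by ring
            rw [neg_mul]
            linarith
          calc ∑ j, (w n j / ∑ i, w n i) * Real.exp (-η * L t₀ j)
              ≤ ∑ j, (w n j / ∑ i, w n i) * (1 - η * L t₀ j + η^2/2) := by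
                apply Finset.sum_le_sum
                intro j _
                exact mul_le_mul_of_nonneg_left (hle j) (div_pos (hwpos n hn.le j) hZn).le
          _ = 1 - η * (∑ j, (w n j / ∑ i, w n i) * L t₀ j) + η^2/2 := by
              have hsum := hwsum n hn.le
              rw [Finset.sum_congr rfl (fun j _ => by ring :
                ∀ j ∈ Finset.univ, (w n j / ∑ i, w n i) * (1 - η * L t₀ j + η^2/2) =
                  (w n j / ∑ i, w n i) * (1 + η^2/2) - η * ((w n j / ∑ i, w n i) * L t₀ j))]
              rw [Finset.sum_sub_distrib, ← Finset.sum_mul, hsum, ← Finset.mul_sum]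
              ring
        rw [e1, Real.log_mul (ne_of_gt hZn) (ne_of_gt hpos2)]
        have hlog := Real.log_le_sub_one_of_pos hpos2
        linarith
      calc Real.log (∑ j, w (n+1) j) ≤ Real.log (∑ j, w n j) +
            (-η * (∑ j, (w n j / ∑ i, w n i) * L t₀ j) + η^2/2) := step
      _ ≤ Real.log K + ∑ t ∈ Finset.univ.filter (fun t : Fin T => t.1 < n),
            (-η * (∑ j, (w t.1 j / ∑ i, w t.1 i) * L t j) + η^2/2) +
            (-η * (∑ j, (w n j / ∑ i, w n i) * L t₀ j) + η^2/2) := by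
          linarith [ih hn.le]
      _ = Real.log K + ∑ t ∈ Finset.univ.filter (fun t : Fin T => t.1 < n + 1),
            (-η * (∑ j, (w t.1 j / ∑ i, w t.1 i) * L t j) + η^2/2) := by
          rw [hfilter n hn, Finset.sum_insert (hnotmem n hn)]
          ring
  -- lower bound: w  T jstar
  have hlowprod : ∀ n, n ≤ T → w n jstar =
      Real.exp (-η * ∑ t ∈ Finset.univ.filter (fun t : Fin T => t.1 < n), L t jstar) := by
    intro n
    induction n with
    | zero =>
      intro _
      simp [hw0]
    | succ n ih =>
      intro h
      have hn : n < T := Nat.lt_of_succ_le h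
      rw [hrec ⟨n, hn⟩ jstar, ih hn.le, hfilter n hn, Finset.sum_insert (hnotmem n hn),
        ← Real.exp_add]
      congr 1
      ring
  have hlow : -η * ∑ t, L t jstar ≤ Real.log (∑ j, w T j) := by
    have h1 : w T jstar ≤ ∑ j, w T j :=
      Finset.single_le_sum (fun j _ => (hwpos T le_rfl j).le) (Finset.mem_univ jstar)
    have h2 := Real.log_le_log (hwpos T le_rfl jstar) h1
    rw [hlowprod T le_rfl, Real.log_exp, hfT] at h2
    exact h2
  have hupT := hup T le_rfl
  rw [hfT] at hupT
  have e2 : ∑ t : Fin T, (-η * (∑ j, (w t.1 j / ∑ i, w t.1 i) * L t j) + η^2/2)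
      = -η * ∑ t, (∑ j, (w t.1 j / ∑ i, w t.1 i) * L t j) + T * (η^2/2) := by
    rw [Finset.sum_add_distrib, ← Finset.mul_sum, Finset.sum_const, Finset.card_univ,
      Fintype.card_fin, nsmul_eq_mul]
  rw [e2] at hupT
  have hcomb := le_trans hlow hupT
  have hx : η * (Real.log K / η) = Real.log K := by field_simp
  have h3 : η * (∑ t, (∑ j, (w t.1 j / ∑ i, w t.1 i) * L t j)) ≤
      η * (∑ t, L t jstar + (Real.log K / η + T * η / 2)) := by nlinarith [hcomb, hx]
  have hdiv := le_of_mul_le_mul_left h3 hηpos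
  have hfin : Real.log K / η + T * η / 2 = s := by
    rw [hηs]
    rw [div_div_eq_mul_div]
    have hTne : (T:ℝ) ≠ 0 := ne_of_gt hTpos
    have hsne : s ≠ 0 := ne_of_gt hspos
    field_simp
    nlinarith [hs2]
  rw [← hfin]
  exact hdiv

lemma exchange_core (T : ℕ) (N' : Fin T → ℕ) (hNpos : ∀ t, 0 < N' t)
    (q : (t : Fin T) → Fin (N' t) → ℝ) (hqsum : ∀ t, ∑ v, q t v = 1) (t : Fin T)
    (g : ((s : Fin T) → Fin (N' s)) → Fin (N' t) → ℝ)
    (hg : ∀ ys ys', (∀ s, s ≠ t → ys s = ys' s) → ∀ v, g ys v = g ys' v) :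
    ∑ ys : (s : Fin T) → Fin (N' s), (∏ s, q s (ys s)) * g ys (ys t)
      = ∑ ys : (s : Fin T) → Fin (N' s), (∏ s, q s (ys s)) * ∑ v, q t v * g ys v := by
  classical
  set e := Equiv.piSplitAt t (fun s => Fin (N' s)) with he
  rw [← e.symm.sum_comp (fun ys => (∏ s, q s (ys s)) * g ys (ys t)),
    ← e.symm.sum_comp (fun ys => (∏ s, q s (ys s)) * ∑ v, q t v * g ys v)]
  rw [Fintype.sum_prod_type, Fintype.sum_prod_type]
  rw [Finset.sum_comm]
  conv_rhs => rw [Finset.sum_comm]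
  apply Finset.sum_congr rfl
  intro rest _
  have hyst : ∀ v : Fin (N' t), (e.symm (v, rest)) t = v := by
    intro v
    simp [he, Equiv.piSplitAt]
  have hagree : ∀ (v v' : Fin (N' t)) (s : Fin T), s ≠ t →
      (e.symm (v, rest)) s = (e.symm (v', rest)) s := by
    intro v v' s hs
    simp [he, Equiv.piSplitAt, dif_neg hs]
  set v₀ : Fin (N' t) := ⟨0, hNpos t⟩ with hv₀
  set R₀ : ℝ := ∏ s ∈ Finset.univ.erase t, q s ((e.symm (v₀, rest)) s) with hR₀
  have hprod : ∀ v : Fin (N' t), (∏ s, q s ((e.symm (v, rest)) s)) = q t v * R₀ := by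
    intro v
    rw [← Finset.mul_prod_erase Finset.univ _ (Finset.mem_univ t), hyst v, hR₀]
    congr 1
    apply Finset.prod_congr rfl
    intro s hs
    rw [hagree v v₀ s (Finset.mem_erase.mp hs).1]
  have hgv : ∀ (v : Fin (N' t)) (u : Fin (N' t)),
      g (e.symm (v, rest)) u = g (e.symm (v₀, rest)) u := by
    intro v u
    exact hg _ _ (fun s hs => hagree v v₀ s hs) u
  calc ∑ v : Fin (N' t), (∏ s, q s ((e.symm (v, rest)) s)) * g (e.symm (v, rest)) ((e.symm (v, rest)) t)
      = ∑ v : Fin (N' t), q t v * R₀ * g (e.symm (v₀, rest)) v := by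
        apply Finset.sum_congr rfl
        intro v _
        rw [hprod v, hyst v, hgv v v]
  _ = R₀ * ∑ v : Fin (N' t), q t v * g (e.symm (v₀, rest)) v := by
        rw [Finset.mul_sum]
        apply Finset.sum_congr rfl
        intro v _
        ring
  _ = (∑ v : Fin (N' t), q t v) * (R₀ * ∑ u : Fin (N' t), q t u * g (e.symm (v₀, rest)) u) := by
        rw [hqsum t]
        ring
  _ = ∑ v : Fin (N' t), (∏ s, q s ((e.symm (v, rest)) s)) * ∑ u : Fin (N' t), q t u * g (e.symm (v, rest)) u := by
        rw [Finset.sum_mul]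
        apply Finset.sum_congr rfl
        intro v _
        rw [hprod v]
        have : ∑ u : Fin (N' t), q t u * g (e.symm (v, rest)) u
            = ∑ u : Fin (N' t), q t u * g (e.symm (v₀, rest)) u := by
          apply Finset.sum_congr rfl
          intro u _
          rw [hgv v u]
        rw [this]
        ring

set_option maxHeartbeats 1000000 in
lemma kl_step (M K T : ℕ) (hK : 2 ≤ K) (hM : 1 ≤ M) (hT : 1 ≤ T)
    (Nt : ℕ) (hNt : 0 < Nt)
    (G : Fin M → ℝ) (hGnn : ∀ y, 0 ≤ G y) (hG1 : ∑ y, G y = 1)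
    (S : Fin M → Finset (Fin Nt))
    (hSdisj : ∀ y y', y ≠ y' → Disjoint (S y) (S y'))
    (hScover : ∀ v, ∃ y, v ∈ S y)
    (hcard0 : ∀ y, (S y).card = 0 → G y = 0)
    (hcardG : ∀ y, (M:ℝ) * G y ≤ (S y).card)
    (q : Fin Nt → ℝ)
    (hq : ∀ y, ∀ v ∈ S y, q v = (1 - 1/(T:ℝ)) * G y / (S y).card + 1/((T:ℝ) * Nt))
    (hqlo : ∀ v, 1/((T:ℝ)*K*M) ≤ q v) (hqhi : ∀ v, q v ≤ 1/(M:ℝ))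
    (pb : Fin Nt → ℝ)
    (hpblo : ∀ v, 1/((T:ℝ)*K*M) ≤ pb v) (hpbhi : ∀ v, pb v ≤ 1/(M:ℝ))
    (τ : ℝ) (hτ : τ = if T = 1 then Real.log K else Real.log ((T:ℝ)/((T:ℝ)-1))) :
    ∑ y, G y * Real.log (G y / ∑ v ∈ S y, pb v) ≤
      (∑ v, q v * (Real.log (q v) - Real.log (pb v))) + (2 * Real.log ((K:ℝ)*T) / T + τ) := by
  have hTR : (1:ℝ) ≤ T := by exact_mod_cast hT
  have hKR : (2:ℝ) ≤ K := by exact_mod_cast hK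
  have hMR : (1:ℝ) ≤ M := by exact_mod_cast hM
  have hTpos : (0:ℝ) < T := by linarith
  have hKpos : (0:ℝ) < K := by linarith
  have hMpos : (0:ℝ) < M := by linarith
  have hNtpos : (0:ℝ) < Nt := by exact_mod_cast hNt
  have hlo : (0:ℝ) < 1/((T:ℝ)*K*M) := by positivity
  have hlogKT : 0 < Real.log ((K:ℝ)*T) := Real.log_pos (by nlinarith)
  -- partition
  have hbi : Finset.univ.biUnion S = (Finset.univ : Finset (Fin Nt)) := by
    ext v
    simp only [Finset.mem_biUnion, Finset.mem_univ, true_and, iff_true]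
    exact hScover v
  have hpart : ∀ f : Fin Nt → ℝ, ∑ v, f v = ∑ y, ∑ v ∈ S y, f v := by
    intro f
    rw [← hbi, Finset.sum_biUnion]
    intro y _ y' _ hyy'
    exact hSdisj y y' hyy'
  have hcards : ∑ y, ((S y).card : ℝ) = (Nt : ℝ) := by
    have h1 : (Finset.univ.biUnion S).card = ∑ y, (S y).card := by
      apply Finset.card_biUnion
      intro y _ y' _ hyy'
      exact hSdisj y y' hyy'
    rw [hbi] at h1
    simp only [Finset.card_univ, Fintype.card_fin] at h1
    exact_mod_cast h1.symm
  -- block sums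
  have hqh_eq : ∀ y, ∑ v ∈ S y, q v =
      (1 - 1/(T:ℝ)) * G y + ((S y).card : ℝ) / ((T:ℝ) * Nt) := by
    intro y
    rcases Nat.eq_zero_or_pos (S y).card with h0 | hpos
    · rw [Finset.card_eq_zero.mp h0]
      simp [hcard0 y h0, h0]
    · have hcR : (0:ℝ) < (S y).card := by exact_mod_cast hpos
      rw [Finset.sum_congr rfl (fun v hv => hq y v hv), Finset.sum_const, nsmul_eq_mul]
      field_simp
  have hql : ∀ y, ((S y).card : ℝ) * (1/((T:ℝ)*K*M)) ≤ ∑ v ∈ S y, q v := by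
    intro y
    calc ((S y).card : ℝ) * (1/((T:ℝ)*K*M)) = ∑ _v ∈ S y, 1/((T:ℝ)*K*M) := by
          rw [Finset.sum_const, nsmul_eq_mul]
    _ ≤ ∑ v ∈ S y, q v := Finset.sum_le_sum (fun v _ => hqlo v)
  have hqu : ∀ y, ∑ v ∈ S y, q v ≤ ((S y).card : ℝ) * (1/(M:ℝ)) := by
    intro y
    calc ∑ v ∈ S y, q v ≤ ∑ _v ∈ S y, 1/(M:ℝ) := Finset.sum_le_sum (fun v _ => hqhi v)
    _ = ((S y).card : ℝ) * (1/(M:ℝ)) := by rw [Finset.sum_const, nsmul_eq_mul]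
  have hpl : ∀ y, ((S y).card : ℝ) * (1/((T:ℝ)*K*M)) ≤ ∑ v ∈ S y, pb v := by
    intro y
    calc ((S y).card : ℝ) * (1/((T:ℝ)*K*M)) = ∑ _v ∈ S y, 1/((T:ℝ)*K*M) := by
          rw [Finset.sum_const, nsmul_eq_mul]
    _ ≤ ∑ v ∈ S y, pb v := Finset.sum_le_sum (fun v _ => hpblo v)
  have hpu : ∀ y, ∑ v ∈ S y, pb v ≤ ((S y).card : ℝ) * (1/(M:ℝ)) := by
    intro y
    calc ∑ v ∈ S y, pb v ≤ ∑ _v ∈ S y, 1/(M:ℝ) := Finset.sum_le_sum (fun v _ => hpbhi v)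
    _ = ((S y).card : ℝ) * (1/(M:ℝ)) := by rw [Finset.sum_const, nsmul_eq_mul]
  have hτnn : 0 ≤ τ := by
    rw [hτ]
    split_ifs with h1
    · exact (Real.log_pos (by linarith)).le
    · apply Real.log_nonneg
      have hT2 : (2:ℝ) ≤ T := by
        have : 2 ≤ T := by omega
        exact_mod_cast this
      rw [le_div_iff₀ (by linarith)]
      linarith
  -- per-y inequality
  have key : ∀ y, G y * Real.log (G y / ∑ v ∈ S y, pb v)
      - (∑ v ∈ S y, q v * (Real.log (q v) - Real.log (pb v)))
      ≤ G y * τ + (G y / T + ((S y).card : ℝ)/((T:ℝ)*Nt)) * Real.log ((K:ℝ)*T) := by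
    intro y
    rcases Nat.eq_zero_or_pos (S y).card with h0 | hpos
    · have hSempty : S y = ∅ := Finset.card_eq_zero.mp h0
      have hGy : G y = 0 := hcard0 y h0
      rw [hSempty, hGy]
      simp
    · have hcR : (0:ℝ) < (S y).card := by exact_mod_cast hpos
      set sy : ℝ := ((S y).card : ℝ) with hsy
      set qh : ℝ := ∑ v ∈ S y, q v with hqh
      set ph : ℝ := ∑ v ∈ S y, pb v with hph
      have hqhpos : 0 < qh := lt_of_lt_of_le (by positivity) (hql y)
      have hphpos : 0 < ph := lt_of_lt_of_le (by positivity) (hpl y)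
      have hsyne : sy ≠ 0 := ne_of_gt hcR
      have hqhne : qh ≠ 0 := ne_of_gt hqhpos
      have hphne : ph ≠ 0 := ne_of_gt hphpos
      -- Step A: block KL lower bound
      have hStepA : qh * (Real.log qh - Real.log ph) ≤
          ∑ v ∈ S y, q v * (Real.log (q v) - Real.log (pb v)) := by
        have hqc : ∀ v ∈ S y, q v = qh / sy := by
          intro v hv
          rw [hq y v hv, hqh, hqh_eq y, hsy]
          field_simp
        have hjen : ∑ v ∈ S y, (1/sy) * Real.log (pb v) ≤ Real.log (ph / sy) := by
          have h1 := jensen_log (S y) (fun _ => 1/sy) pb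
            (fun v _ => by positivity)
            (by rw [Finset.sum_const, nsmul_eq_mul]; field_simp; exact hsy.symm)
            (fun v _ => lt_of_lt_of_le hlo (hpblo v))
          have h2 : ∑ v ∈ S y, (1/sy) * pb v = ph / sy := by
            rw [← Finset.mul_sum, hph]; ring
          rw [h2] at h1
          exact h1
        have hexp : ∑ v ∈ S y, q v * (Real.log (q v) - Real.log (pb v)) =
            qh * Real.log (qh / sy) - qh * (∑ v ∈ S y, (1/sy) * Real.log (pb v)) := by
          calc ∑ v ∈ S y, q v * (Real.log (q v) - Real.log (pb v))
              = ∑ v ∈ S y, (qh/sy * Real.log (qh/sy) - qh * ((1/sy) * Real.log (pb v))) := by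
                apply Finset.sum_congr rfl
                intro v hv
                rw [hqc v hv]
                ring
          _ = sy * (qh/sy * Real.log (qh/sy)) - qh * (∑ v ∈ S y, (1/sy) * Real.log (pb v)) := by
                rw [Finset.sum_sub_distrib, Finset.sum_const, nsmul_eq_mul, ← Finset.mul_sum]
          _ = qh * Real.log (qh / sy) - qh * (∑ v ∈ S y, (1/sy) * Real.log (pb v)) := by
                congr 1
                field_simp
        rw [hexp]
        have h3 := mul_le_mul_of_nonneg_left hjen hqhpos.le
        have h4 : qh * Real.log (qh / sy) - qh * Real.log (ph / sy) =
            qh * (Real.log qh - Real.log ph) := by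
          rw [Real.log_div hqhne hsyne, Real.log_div hphne hsyne]
          ring
        linarith
      -- algebraic identity
      have htermeq : G y * Real.log (G y / ph) - qh * (Real.log qh - Real.log ph)
          = G y * (Real.log (G y) - Real.log qh) + (qh - G y) * (Real.log ph - Real.log qh) := by
        rcases eq_or_lt_of_le (hGnn y) with hG0' | hGpos
        · rw [← hG0']
          ring
        · rw [Real.log_div (ne_of_gt hGpos) hphne]
          ring
      -- term2 bound
      have hterm2 : G y * (Real.log (G y) - Real.log qh) ≤ G y * τ := by
        rcases eq_or_lt_of_le (hGnn y) with hG0' | hGpos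
        · rw [← hG0']
          simp
        · apply mul_le_mul_of_nonneg_left _ (hGnn y)
          rw [hτ]
          split_ifs with hT1
          · have hTRe : (T:ℝ) = 1 := by rw [hT1]; norm_num
            have h5 : (M:ℝ) * G y ≤ sy := hcardG y
            have h6 : sy * (1/((T:ℝ)*K*M)) ≤ qh := hql y
            rw [hTRe] at h6
            have h6' : G y / K ≤ qh := by
              have he : G y / K = (M:ℝ) * G y * (1/(1*(K:ℝ)*M)) := by
                field_simp
              calc G y / K = (M:ℝ) * G y * (1/(1*(K:ℝ)*M)) := he
              _ ≤ sy * (1/(1*(K:ℝ)*M)) :=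
                  mul_le_mul_of_nonneg_right h5 (by positivity)
              _ ≤ qh := h6
            have h7 := Real.log_le_log (div_pos hGpos hKpos) h6'
            rw [Real.log_div (ne_of_gt hGpos) (ne_of_gt hKpos)] at h7
            linarith
          · have hT2 : (2:ℝ) ≤ T := by
              have h2T : 2 ≤ T := by omega
              exact_mod_cast h2T
            have hfac : (0:ℝ) < 1 - 1/(T:ℝ) := by
              rw [sub_pos, div_lt_one hTpos]; linarith
            have hq1 : (1 - 1/(T:ℝ)) * G y ≤ qh := by
              rw [hqh, hqh_eq y]
              have h9 : (0:ℝ) ≤ (((S y).card : ℕ):ℝ) / ((T:ℝ) * Nt) := by positivity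
              linarith
            have h7 := Real.log_le_log (mul_pos hfac hGpos) hq1
            rw [Real.log_mul (ne_of_gt hfac) (ne_of_gt hGpos)] at h7
            have h8 : Real.log (1 - 1/(T:ℝ)) = - Real.log ((T:ℝ)/((T:ℝ)-1)) := by
              rw [← Real.log_inv]
              congr 1
              field_simp
            linarith
      -- term3 bound
      have hterm3 : (qh - G y) * (Real.log ph - Real.log qh) ≤
          (G y / T + sy/((T:ℝ)*Nt)) * Real.log ((K:ℝ)*T) := by
        have habs1 : |qh - G y| ≤ G y / T + sy/((T:ℝ)*Nt) := by
          have he : qh - G y = sy/((T:ℝ)*Nt) - G y / T := by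
            rw [hqh, hqh_eq y, hsy]
            ring
          have h9 : (0:ℝ) ≤ sy/((T:ℝ)*Nt) := by positivity
          have h10 : (0:ℝ) ≤ G y / T := div_nonneg (hGnn y) hTpos.le
          rw [he, abs_le]
          constructor <;> linarith
        have habs2 : |Real.log ph - Real.log qh| ≤ Real.log ((K:ℝ)*T) := by
          have hlM : Real.log ((1:ℝ)/M) = - Real.log M := by
            rw [one_div, Real.log_inv]
          have hlTKM : Real.log ((1:ℝ)/((T:ℝ)*K*M)) =
              -(Real.log T + Real.log K + Real.log M) := by
            rw [one_div, Real.log_inv, Real.log_mul (by positivity) (by positivity),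
              Real.log_mul (by positivity) (by positivity)]
          have hlKT : Real.log ((K:ℝ)*T) = Real.log K + Real.log T :=
            Real.log_mul (by positivity) (by positivity)
          have hup1 : Real.log ph ≤ Real.log sy - Real.log M := by
            calc Real.log ph ≤ Real.log (sy * (1/(M:ℝ))) := Real.log_le_log hphpos (hpu y)
            _ = Real.log sy - Real.log M := by
                rw [Real.log_mul hsyne (by positivity), hlM]; ring
          have hup2 : Real.log qh ≤ Real.log sy - Real.log M := by
            calc Real.log qh ≤ Real.log (sy * (1/(M:ℝ))) := Real.log_le_log hqhpos (hqu y)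
            _ = Real.log sy - Real.log M := by
                rw [Real.log_mul hsyne (by positivity), hlM]; ring
          have hdn1 : Real.log sy - (Real.log T + Real.log K + Real.log M) ≤ Real.log ph := by
            calc Real.log sy - (Real.log T + Real.log K + Real.log M)
                = Real.log (sy * ((1:ℝ)/((T:ℝ)*K*M))) := by
                  rw [Real.log_mul hsyne (by positivity), hlTKM]; ring
            _ ≤ Real.log ph := Real.log_le_log (by positivity) (hpl y)
          have hdn2 : Real.log sy - (Real.log T + Real.log K + Real.log M) ≤ Real.log qh := by
            calc Real.log sy - (Real.log T + Real.log K + Real.log M)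
                = Real.log (sy * ((1:ℝ)/((T:ℝ)*K*M))) := by
                  rw [Real.log_mul hsyne (by positivity), hlTKM]; ring
            _ ≤ Real.log qh := Real.log_le_log (by positivity) (hql y)
          rw [abs_le, hlKT]
          constructor <;> linarith
        calc (qh - G y) * (Real.log ph - Real.log qh)
            ≤ |(qh - G y) * (Real.log ph - Real.log qh)| := le_abs_self _
        _ = |qh - G y| * |Real.log ph - Real.log qh| := abs_mul _ _
        _ ≤ (G y / T + sy/((T:ℝ)*Nt)) * Real.log ((K:ℝ)*T) :=
            mul_le_mul habs1 habs2 (abs_nonneg _) (le_trans (abs_nonneg _) habs1)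
      linarith [hStepA, htermeq, hterm2, hterm3]
  -- summation
  rw [hpart (fun v => q v * (Real.log (q v) - Real.log (pb v)))]
  have hsum := Finset.sum_le_sum (s := (Finset.univ : Finset (Fin M))) (fun y _ => key y)
  rw [Finset.sum_sub_distrib, Finset.sum_add_distrib] at hsum
  have e1 : ∑ y, (G y * τ) = τ := by
    rw [← Finset.sum_mul, hG1, one_mul]
  have e2 : ∑ y, ((G y / T + ((S y).card:ℝ)/((T:ℝ)*Nt)) * Real.log ((K:ℝ)*T))
      = 2 * Real.log ((K:ℝ)*T) / T := by
    rw [← Finset.sum_mul, Finset.sum_add_distrib, ← Finset.sum_div, hG1, ← Finset.sum_div,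
      hcards]
    field_simp
    ring
  rw [e1, e2] at hsum
  linarith

set_option maxHeartbeats 2000000 in
lemma part_b
    (X : Type*) (M K T : ℕ) (hK : 2 ≤ K) (hM : 1 ≤ M) (hT : Real.log K < T)
    (c' c : ℝ) (hc'pos : 0 < c')
    (hc : c = 1 / (Real.log ((K : ℝ) * T) + 2 * c'))
    (F : Fin K → X → Fin M → ℝ) (hF : ∀ j x, IsDist (F j x))
    (x : Fin T → X) (jstar : Fin K)
    (N' : Fin T → ℕ)
    (S : (t : Fin T) → Fin M → Finset (Fin (N' t)))
    (hScard : ∀ t y, (S t y).card = ⌈(M : ℝ) * ⨆ j, F j (x t) y⌉₊)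
    (hSdisj : ∀ t (y y' : Fin M), y ≠ y' → Disjoint (S t y) (S t y'))
    (hScover : ∀ t (v : Fin (N' t)), ∃ y, v ∈ S t y)
    (pbar : (t : Fin T) → Fin K → Fin (N' t) → ℝ)
    (hpbar : ∀ t j y v, v ∈ S t y →
      pbar t j v = (1 - 1 / (T : ℝ)) * F j (x t) y / (S t y).card +
        1 / ((T : ℝ) * N' t))
    (hclip : ∀ t j v, 1 / ((T : ℝ) * K * M) ≤ pbar t j v ∧ pbar t j v ≤ 1 / (M : ℝ))
    (η : ℝ) (hη : η = Real.sqrt (2 * Real.log K / T)) :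
    ∀ (Lap : Fin T → Fin K → ℝ), (∀ t j, |Lap t j| ≤ c') →
      ∀ (w : ((t : Fin T) → Fin (N' t)) → ℕ → Fin K → ℝ),
        (∀ ys j, w ys 0 j = 1) →
        (∀ ys (t : Fin T) (j : Fin K),
          w ys (t.1 + 1) j = w ys t.1 j *
            Real.exp (-η * (-c * (Real.log (pbar t j (ys t)) + Lap t j +
              Real.log (M : ℝ) - c')))) →
        (∑ ys : (t : Fin T) → Fin (N' t),
            (∏ t, pbar t jstar (ys t)) *
              (∑ t : Fin T, ∑ y : Fin M,
                F jstar (x t) y *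
                  Real.log (F jstar (x t) y /
                    (∑ v ∈ S t y, ∑ j : Fin K,
                      (w ys t.1 j / ∑ i : Fin K, w ys t.1 i) * pbar t j v))))
          ≤ (1 / c) * Real.sqrt (2 * T * Real.log K) + 3 * Real.log ((K : ℝ) * T) +
            (∑ t : Fin T, ∑ j : Fin K,
              (∑ ys : (t : Fin T) → Fin (N' t),
                  (∏ t', pbar t' jstar (ys t')) *
                    (w ys t.1 j / ∑ i : Fin K, w ys t.1 i)) * Lap t j) -
            ∑ t : Fin T, Lap t jstar := by
  intro Lap hLap w hw0 hwrec
  haveI : Nonempty (Fin K) := ⟨⟨0, by omega⟩⟩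
  classical
  -- numerics
  have hlogK : 0 < Real.log K := Real.log_pos (by exact_mod_cast hK)
  have hTRpos : (0:ℝ) < T := lt_trans hlogK hT
  have hT1 : 1 ≤ T := by exact_mod_cast hTRpos
  have hTR1 : (1:ℝ) ≤ T := by exact_mod_cast hT1
  have hKR : (2:ℝ) ≤ K := by exact_mod_cast hK
  have hKpos : (0:ℝ) < K := by linarith
  have hMR : (1:ℝ) ≤ M := by exact_mod_cast hM
  have hMpos : (0:ℝ) < M := by linarith
  have hlogKT : 0 < Real.log ((K:ℝ)*T) := Real.log_pos (by nlinarith)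
  have hcpos : 0 < c := by rw [hc]; positivity
  have hcinv : c * (Real.log ((K:ℝ)*T) + 2*c') = 1 := by
    rw [hc]; field_simp
  have hlo : (0:ℝ) < 1/((T:ℝ)*K*M) := by positivity
  have hpbarpos : ∀ t j v, 0 < pbar t j v := fun t j v => lt_of_lt_of_le hlo (hclip t j v).1
  have hbdd : ∀ t y, BddAbove (Set.range fun j => F j (x t) y) :=
    fun t y => (Set.finite_range _).bddAbove
  have hsupnn : ∀ t y, 0 ≤ ⨆ j, F j (x t) y :=
    fun t y => le_trans ((hF jstar (x t)).1 y) (le_ciSup (hbdd t y) jstar)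
  have hcard0 : ∀ t y, (S t y).card = 0 → F jstar (x t) y = 0 := by
    intro t y h0
    rw [hScard t y] at h0
    have h1 : (M:ℝ) * ⨆ j, F j (x t) y ≤ 0 := by
      have := Nat.ceil_eq_zero.mp h0
      exact this
    have h2 : ⨆ j, F j (x t) y ≤ 0 := by nlinarith [hsupnn t y]
    have h3 := le_ciSup (hbdd t y) jstar
    have h4 := (hF jstar (x t)).1 y
    linarith
  have hcardG : ∀ t y, (M:ℝ) * F jstar (x t) y ≤ ((S t y).card : ℝ) := by
    intro t y
    rw [hScard t y]
    calc (M:ℝ) * F jstar (x t) y ≤ (M:ℝ) * ⨆ j, F j (x t) y :=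
        mul_le_mul_of_nonneg_left (le_ciSup (hbdd t y) jstar) hMpos.le
    _ ≤ (⌈(M:ℝ) * ⨆ j, F j (x t) y⌉₊ : ℝ) := Nat.le_ceil _
  have hN'pos : ∀ t, 0 < N' t := by
    intro t
    by_contra h0
    push_neg at h0
    have hN0 : N' t = 0 := by omega
    have hall : ∀ y, F jstar (x t) y = 0 := by
      intro y
      apply hcard0 t y
      have h1 : (S t y).card ≤ (Finset.univ : Finset (Fin (N' t))).card :=
        Finset.card_le_card (Finset.subset_univ _)
      have h2 : (Finset.univ : Finset (Fin (N' t))).card = N' t := by simp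
      omega
    have h2 := (hF jstar (x t)).2
    have h3 : ∑ y, F jstar (x t) y = 0 := Finset.sum_eq_zero (fun y _ => hall y)
    rw [h2] at h3
    norm_num at h3
  -- partition facts (per t)
  have hpart : ∀ t (f : Fin (N' t) → ℝ), ∑ v, f v = ∑ y, ∑ v ∈ S t y, f v := by
    intro t f
    have hbi : Finset.univ.biUnion (S t) = (Finset.univ : Finset (Fin (N' t))) := by
      ext v
      simp only [Finset.mem_biUnion, Finset.mem_univ, true_and, iff_true]
      exact hScover t v
    rw [← hbi, Finset.sum_biUnion]
    intro y _ y' _ hyy'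
    exact hSdisj t y y' hyy'
  have hcards : ∀ t, ∑ y, (((S t y).card : ℕ) : ℝ) = ((N' t : ℕ) : ℝ) := by
    intro t
    have hbi : Finset.univ.biUnion (S t) = (Finset.univ : Finset (Fin (N' t))) := by
      ext v
      simp only [Finset.mem_biUnion, Finset.mem_univ, true_and, iff_true]
      exact hScover t v
    have h1 : (Finset.univ.biUnion (S t)).card = ∑ y, (S t y).card := by
      apply Finset.card_biUnion
      intro y _ y' _ hyy'
      exact hSdisj t y y' hyy'
    rw [hbi] at h1
    simp only [Finset.card_univ, Fintype.card_fin] at h1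
    exact_mod_cast h1.symm
  have hqsum : ∀ t, ∑ v, pbar t jstar v = 1 := by
    intro t
    have hNR : (0:ℝ) < N' t := by exact_mod_cast hN'pos t
    rw [hpart t (fun v => pbar t jstar v)]
    have hblock : ∀ y, ∑ v ∈ S t y, pbar t jstar v =
        (1 - 1/(T:ℝ)) * F jstar (x t) y + ((S t y).card : ℝ)/((T:ℝ) * N' t) := by
      intro y
      rcases Nat.eq_zero_or_pos (S t y).card with h0 | hpos
      · rw [Finset.card_eq_zero.mp h0]
        simp [hcard0 t y h0, h0]
      · have hcR : (0:ℝ) < (S t y).card := by exact_mod_cast hpos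
        rw [Finset.sum_congr rfl (fun v hv => hpbar t jstar y v hv), Finset.sum_const,
          nsmul_eq_mul]
        field_simp
    rw [Finset.sum_congr rfl (fun y _ => hblock y), Finset.sum_add_distrib,
      ← Finset.mul_sum, (hF jstar (x t)).2, ← Finset.sum_div, hcards t]
    field_simp
    ring
  have hPnn : ∀ ys : (t : Fin T) → Fin (N' t), 0 ≤ ∏ t, pbar t jstar (ys t) :=
    fun ys => Finset.prod_nonneg (fun t _ => (hpbarpos t jstar (ys t)).le)
  have hPsum : ∑ ys : (t : Fin T) → Fin (N' t), ∏ t, pbar t jstar (ys t) = 1 := by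
    have h1 : ∏ t : Fin T, (∑ v ∈ Finset.univ, pbar t jstar v) =
        ∑ ys ∈ Fintype.piFinset (fun t : Fin T => (Finset.univ : Finset (Fin (N' t)))),
          ∏ t, pbar t jstar (ys t) := Finset.prod_univ_sum _ _
    rw [Fintype.piFinset_univ] at h1
    rw [← h1]
    rw [Finset.prod_congr rfl (fun t _ => hqsum t)]
    exact Finset.prod_const_one
  -- weights
  have hwpos : ∀ ys n, n ≤ T → ∀ j, 0 < w ys n j := by
    intro ys n
    induction n with
    | zero => intro _ j; rw [hw0]; norm_num
    | succ n ih =>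
      intro h j
      have hn : n < T := Nat.lt_of_succ_le h
      rw [hwrec ys ⟨n, hn⟩ j]
      exact mul_pos (ih (le_of_lt hn) j) (Real.exp_pos _)
  have hZpos : ∀ ys n, n ≤ T → 0 < ∑ i, w ys n i :=
    fun ys n hn => Finset.sum_pos (fun i _ => hwpos ys n hn i) Finset.univ_nonempty
  have hwtnn : ∀ ys (t : Fin T) j, 0 ≤ w ys t.1 j / ∑ i, w ys t.1 i :=
    fun ys t j => le_of_lt (div_pos (hwpos ys t.1 t.isLt.le j) (hZpos ys t.1 t.isLt.le))
  have hwtsum : ∀ ys (t : Fin T), ∑ j, w ys t.1 j / ∑ i, w ys t.1 i = 1 := by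
    intro ys t
    rw [← Finset.sum_div, div_self (ne_of_gt (hZpos ys t.1 t.isLt.le))]
  have hwdep : ∀ n, n ≤ T → ∀ ys ys', (∀ s : Fin T, (s:ℕ) < n → ys s = ys' s) →
      ∀ j, w ys n j = w ys' n j := by
    intro n
    induction n with
    | zero => intro _ ys ys' _ j; rw [hw0, hw0]
    | succ n ih =>
      intro h ys ys' hagree j
      have hn : n < T := Nat.lt_of_succ_le h
      rw [hwrec ys ⟨n, hn⟩ j, hwrec ys' ⟨n, hn⟩ j,
        ih (le_of_lt hn) ys ys' (fun s hs => hagree s (Nat.lt_succ_of_lt hs)) j,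
        hagree ⟨n, hn⟩ (Nat.lt_succ_self n)]
  -- mixture clip bounds
  have hpbclip : ∀ ys (t : Fin T) v,
      1/((T:ℝ)*K*M) ≤ (∑ j, (w ys t.1 j / ∑ i, w ys t.1 i) * pbar t j v) ∧
      (∑ j, (w ys t.1 j / ∑ i, w ys t.1 i) * pbar t j v) ≤ 1/(M:ℝ) := by
    intro ys t v
    have hlow : (1:ℝ)/((T:ℝ)*K*M) ≤ ∑ j, (w ys t.1 j / ∑ i, w ys t.1 i) * pbar t j v := by
      calc (1:ℝ)/((T:ℝ)*K*M) = ∑ j, (w ys t.1 j / ∑ i, w ys t.1 i) * (1/((T:ℝ)*K*M)) := by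
            rw [← Finset.sum_mul, hwtsum ys t, one_mul]
      _ ≤ ∑ j, (w ys t.1 j / ∑ i, w ys t.1 i) * pbar t j v :=
            Finset.sum_le_sum (fun j _ =>
              mul_le_mul_of_nonneg_left (hclip t j v).1 (hwtnn ys t j))
    have hhigh : (∑ j, (w ys t.1 j / ∑ i, w ys t.1 i) * pbar t j v) ≤ 1/(M:ℝ) := by
      calc (∑ j, (w ys t.1 j / ∑ i, w ys t.1 i) * pbar t j v)
            ≤ ∑ j, (w ys t.1 j / ∑ i, w ys t.1 i) * (1/(M:ℝ)) :=
            Finset.sum_le_sum (fun j _ =>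
              mul_le_mul_of_nonneg_left (hclip t j v).2 (hwtnn ys t j))
      _ = 1/(M:ℝ) := by rw [← Finset.sum_mul, hwtsum ys t, one_mul]
    exact ⟨hlow, hhigh⟩
  -- loss bounds
  have hL01 : ∀ (ys : (t : Fin T) → Fin (N' t)) (t : Fin T) (j : Fin K),
      0 ≤ -c * (Real.log (pbar t j (ys t)) + Lap t j + Real.log (M:ℝ) - c') ∧
      -c * (Real.log (pbar t j (ys t)) + Lap t j + Real.log (M:ℝ) - c') ≤ 1 := by
    intro ys t j
    have h1 : Real.log (pbar t j (ys t)) ≤ Real.log (1/(M:ℝ)) :=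
      Real.log_le_log (hpbarpos t j (ys t)) (hclip t j (ys t)).2
    have h2 : Real.log (1/((T:ℝ)*K*M)) ≤ Real.log (pbar t j (ys t)) :=
      Real.log_le_log hlo (hclip t j (ys t)).1
    have h3 : Real.log ((1:ℝ)/M) = - Real.log M := by rw [one_div, Real.log_inv]
    have h4 : Real.log ((1:ℝ)/((T:ℝ)*K*M)) = -(Real.log ((K:ℝ)*T) + Real.log M) := by
      rw [one_div, Real.log_inv, Real.log_mul (by positivity) (by positivity),
        Real.log_mul (by positivity) (by positivity),
        Real.log_mul (by positivity) (by positivity)]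
      ring
    have h5 := abs_le.mp (hLap t j)
    rw [h3] at h1
    rw [h4] at h2
    constructor
    · have hin : Real.log (pbar t j (ys t)) + Lap t j + Real.log (M:ℝ) - c' ≤ 0 := by
        linarith
      nlinarith
    · have hin : -(Real.log ((K:ℝ)*T) + 2*c') ≤
          Real.log (pbar t j (ys t)) + Lap t j + Real.log (M:ℝ) - c' := by
        linarith
      nlinarith
  -- set the sqrt constant
  set sq : ℝ := Real.sqrt (2 * T * Real.log K) with hsq
  clear_value sq
  -- pathwise bound (KEY1)
  have hpath : ∀ ys : (t : Fin T) → Fin (N' t),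
      ∑ t : Fin T, (Real.log (pbar t jstar (ys t)) -
        Real.log (∑ j, (w ys t.1 j / ∑ i, w ys t.1 i) * pbar t j (ys t)))
      ≤ (1/c) * sq +
        (∑ t : Fin T, ∑ j, (w ys t.1 j / ∑ i, w ys t.1 i) * Lap t j) -
        ∑ t : Fin T, Lap t jstar := by
    intro ys
    have hreg := regret_core K T hK hT η hη
      (fun t j => -c * (Real.log (pbar t j (ys t)) + Lap t j + Real.log (M:ℝ) - c'))
      (fun t j => (hL01 ys t j).1) (fun t j => (hL01 ys t j).2)
      (w ys) (hw0 ys) (fun t j => hwrec ys t j) jstar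
    set D : ℝ := Real.log (M:ℝ) - c' with hD
    set SA : ℝ := ∑ t : Fin T, ∑ j, (w ys t.1 j / ∑ i, w ys t.1 i) *
      Real.log (pbar t j (ys t)) with hSA
    set SB : ℝ := ∑ t : Fin T, ∑ j, (w ys t.1 j / ∑ i, w ys t.1 i) * Lap t j with hSB
    set sa : ℝ := ∑ t : Fin T, Real.log (pbar t jstar (ys t)) with hsa
    set sb : ℝ := ∑ t : Fin T, Lap t jstar with hsb
    have eL : ∑ t : Fin T, (∑ j, (w ys t.1 j / ∑ i, w ys t.1 i) *
        (-c * (Real.log (pbar t j (ys t)) + Lap t j + Real.log (M:ℝ) - c')))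
        = -c * SA - c * SB - c * T * D := by
      have e1 : ∀ t : Fin T, (∑ j, (w ys t.1 j / ∑ i, w ys t.1 i) *
          (-c * (Real.log (pbar t j (ys t)) + Lap t j + Real.log (M:ℝ) - c')))
          = -c * (∑ j, (w ys t.1 j / ∑ i, w ys t.1 i) * Real.log (pbar t j (ys t)))
            - c * (∑ j, (w ys t.1 j / ∑ i, w ys t.1 i) * Lap t j) - c * D := by
        intro t
        have : ∀ j ∈ Finset.univ, (w ys t.1 j / ∑ i, w ys t.1 i) *
            (-c * (Real.log (pbar t j (ys t)) + Lap t j + Real.log (M:ℝ) - c'))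
            = (-c) * ((w ys t.1 j / ∑ i, w ys t.1 i) * Real.log (pbar t j (ys t)))
              + (-c) * ((w ys t.1 j / ∑ i, w ys t.1 i) * Lap t j)
              + ((-c) * D) * (w ys t.1 j / ∑ i, w ys t.1 i) := by
          intro j _
          rw [hD]
          ring
        rw [Finset.sum_congr rfl this, Finset.sum_add_distrib, Finset.sum_add_distrib,
          ← Finset.mul_sum, ← Finset.mul_sum, ← Finset.mul_sum, hwtsum ys t]
        ring
      rw [Finset.sum_congr rfl (fun t _ => e1 t), Finset.sum_sub_distrib,
        Finset.sum_sub_distrib, ← Finset.mul_sum, ← Finset.mul_sum, Finset.sum_const,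
        Finset.card_univ, Fintype.card_fin, nsmul_eq_mul, hSA, hSB]
      ring
    have eR : ∑ t : Fin T, (-c * (Real.log (pbar t jstar (ys t)) + Lap t jstar +
        Real.log (M:ℝ) - c')) = -c * sa - c * sb - c * T * D := by
      have : ∀ t ∈ (Finset.univ : Finset (Fin T)),
          -c * (Real.log (pbar t jstar (ys t)) + Lap t jstar + Real.log (M:ℝ) - c')
          = (-c) * Real.log (pbar t jstar (ys t)) + (-c) * Lap t jstar + ((-c) * D) := by
        intro t _
        rw [hD]
        ring
      rw [Finset.sum_congr rfl this, Finset.sum_add_distrib, Finset.sum_add_distrib,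
        ← Finset.mul_sum, ← Finset.mul_sum, Finset.sum_const, Finset.card_univ,
        Fintype.card_fin, nsmul_eq_mul, hsa, hsb]
      ring
    rw [eL, eR] at hreg
    have hdiv : sa - SA ≤ (1/c) * sq + SB - sb := by
      have h5 : c * (sa - SA) ≤ c * ((1/c) * sq + SB - sb) := by
        have he : c * ((1/c) * sq + SB - sb) = sq + c * SB - c * sb := by
          field_simp
        rw [he]
        nlinarith [hreg]
      exact le_of_mul_le_mul_left h5 hcpos
    have hjen : ∀ t : Fin T, (∑ j, (w ys t.1 j / ∑ i, w ys t.1 i) *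
        Real.log (pbar t j (ys t))) ≤
        Real.log (∑ j, (w ys t.1 j / ∑ i, w ys t.1 i) * pbar t j (ys t)) := by
      intro t
      exact jensen_log Finset.univ _ _ (fun j _ => hwtnn ys t j) (hwtsum ys t)
        (fun j _ => hpbarpos t j (ys t))
    calc ∑ t : Fin T, (Real.log (pbar t jstar (ys t)) -
          Real.log (∑ j, (w ys t.1 j / ∑ i, w ys t.1 i) * pbar t j (ys t)))
        ≤ ∑ t : Fin T, (Real.log (pbar t jstar (ys t)) -
          (∑ j, (w ys t.1 j / ∑ i, w ys t.1 i) * Real.log (pbar t j (ys t)))) :=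
          Finset.sum_le_sum (fun t _ => sub_le_sub_left (hjen t) _)
    _ = sa - SA := by rw [Finset.sum_sub_distrib, hsa, hSA]
    _ ≤ (1/c) * sq + SB - sb := hdiv
  -- per-(ys,t) KL comparison (KEY2)
  set τ : ℝ := if T = 1 then Real.log K else Real.log ((T:ℝ)/((T:ℝ)-1)) with hτdef
  clear_value τ
  have hkey2 : ∀ (ys : (t : Fin T) → Fin (N' t)) (t : Fin T),
      ∑ y : Fin M, F jstar (x t) y * Real.log (F jstar (x t) y /
        (∑ v ∈ S t y, ∑ j : Fin K, (w ys t.1 j / ∑ i : Fin K, w ys t.1 i) * pbar t j v))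
      ≤ (∑ v, pbar t jstar v * (Real.log (pbar t jstar v) -
          Real.log (∑ j, (w ys t.1 j / ∑ i, w ys t.1 i) * pbar t j v)))
        + (2 * Real.log ((K:ℝ)*T) / T + τ) := by
    intro ys t
    exact kl_step M K T hK hM hT1 (N' t) (hN'pos t)
      (F jstar (x t)) (hF jstar (x t)).1 (hF jstar (x t)).2
      (S t) (hSdisj t) (hScover t) (hcard0 t) (hcardG t)
      (pbar t jstar) (fun y v hv => hpbar t jstar y v hv)
      (fun v => (hclip t jstar v).1) (fun v => (hclip t jstar v).2)
      (fun v => ∑ j, (w ys t.1 j / ∑ i, w ys t.1 i) * pbar t j v)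
      (fun v => (hpbclip ys t v).1) (fun v => (hpbclip ys t v).2)
      τ hτdef
  -- exchange (KEY3)
  have hkey3 : ∀ t : Fin T,
      ∑ ys : (s : Fin T) → Fin (N' s), (∏ s, pbar s jstar (ys s)) *
        (∑ v, pbar t jstar v * (Real.log (pbar t jstar v) -
          Real.log (∑ j, (w ys t.1 j / ∑ i, w ys t.1 i) * pbar t j v)))
      = ∑ ys : (s : Fin T) → Fin (N' s), (∏ s, pbar s jstar (ys s)) *
        (Real.log (pbar t jstar (ys t)) -
          Real.log (∑ j, (w ys t.1 j / ∑ i, w ys t.1 i) * pbar t j (ys t))) := by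
    intro t
    have := exchange_core T N' hN'pos (fun s v => pbar s jstar v) hqsum t
      (fun ys v => Real.log (pbar t jstar v) -
        Real.log (∑ j, (w ys t.1 j / ∑ i, w ys t.1 i) * pbar t j v))
      (by
        intro ys ys' hagree v
        have hw' : ∀ j, w ys t.1 j = w ys' t.1 j := by
          apply hwdep t.1 t.isLt.le ys ys'
          intro s hs
          apply hagree
          intro hst
          rw [hst] at hs
          omega
        simp only [hw'])
    exact this.symm
  -- budget bound
  have hbudget : (T:ℝ) * (2 * Real.log ((K:ℝ)*T) / T + τ) ≤ 3 * Real.log ((K:ℝ)*T) := by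
    have h1 : (T:ℝ) * (2 * Real.log ((K:ℝ)*T) / T) = 2 * Real.log ((K:ℝ)*T) := by
      field_simp
    have h2 : (T:ℝ) * τ ≤ Real.log ((K:ℝ)*T) := by
      rw [hτdef]
      split_ifs with hT1'
      · subst hT1'
        norm_num
      · have hT2 : 2 ≤ T := by omega
        have := Tlog_bound T hT2
        have h2log : 2 * Real.log 2 = Real.log 4 := by
          rw [show (4:ℝ) = 2^(2:ℕ) by norm_num, Real.log_pow]
          push_cast
          ring
        have h4KT : (4:ℝ) ≤ (K:ℝ)*T := by
          have hT2R : (2:ℝ) ≤ T := by exact_mod_cast hT2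
          nlinarith
        have := Real.log_le_log (by norm_num : (0:ℝ) < 4) h4KT
        linarith [Tlog_bound T hT2]
    calc (T:ℝ) * (2 * Real.log ((K:ℝ)*T) / T + τ)
        = (T:ℝ) * (2 * Real.log ((K:ℝ)*T) / T) + (T:ℝ) * τ := by ring
    _ ≤ 2 * Real.log ((K:ℝ)*T) + Real.log ((K:ℝ)*T) := by linarith
    _ = 3 * Real.log ((K:ℝ)*T) := by ring
  -- ASSEMBLY
  have swap : ∀ (f : ((t : Fin T) → Fin (N' t)) → Fin T → ℝ),
      ∑ ys : (t : Fin T) → Fin (N' t), (∏ s, pbar s jstar (ys s)) * (∑ t, f ys t)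
        = ∑ t, ∑ ys : (t : Fin T) → Fin (N' t), (∏ s, pbar s jstar (ys s)) * f ys t := by
    intro f
    rw [← Finset.sum_comm]
    apply Finset.sum_congr rfl
    intro ys _
    rw [Finset.mul_sum]
  set β : ℝ := 2 * Real.log ((K:ℝ)*T) / T + τ with hβ
  clear_value β
  have step2 : ∀ t : Fin T,
      ∑ ys : (t : Fin T) → Fin (N' t), (∏ s, pbar s jstar (ys s)) *
        (∑ y : Fin M, F jstar (x t) y * Real.log (F jstar (x t) y /
          (∑ v ∈ S t y, ∑ j : Fin K, (w ys t.1 j / ∑ i : Fin K, w ys t.1 i) * pbar t j v)))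
      ≤ (∑ ys : (t : Fin T) → Fin (N' t), (∏ s, pbar s jstar (ys s)) *
          (Real.log (pbar t jstar (ys t)) -
            Real.log (∑ j, (w ys t.1 j / ∑ i, w ys t.1 i) * pbar t j (ys t)))) + β := by
    intro t
    calc ∑ ys : (t : Fin T) → Fin (N' t), (∏ s, pbar s jstar (ys s)) *
        (∑ y : Fin M, F jstar (x t) y * Real.log (F jstar (x t) y /
          (∑ v ∈ S t y, ∑ j : Fin K, (w ys t.1 j / ∑ i : Fin K, w ys t.1 i) * pbar t j v)))
        ≤ ∑ ys : (t : Fin T) → Fin (N' t), (∏ s, pbar s jstar (ys s)) *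
          ((∑ v, pbar t jstar v * (Real.log (pbar t jstar v) -
            Real.log (∑ j, (w ys t.1 j / ∑ i, w ys t.1 i) * pbar t j v))) + β) :=
          Finset.sum_le_sum (fun ys _ =>
            mul_le_mul_of_nonneg_left (hkey2 ys t) (hPnn ys))
    _ = (∑ ys : (t : Fin T) → Fin (N' t), (∏ s, pbar s jstar (ys s)) *
          (∑ v, pbar t jstar v * (Real.log (pbar t jstar v) -
            Real.log (∑ j, (w ys t.1 j / ∑ i, w ys t.1 i) * pbar t j v))))
        + (∑ ys : (t : Fin T) → Fin (N' t), (∏ s, pbar s jstar (ys s))) * β := by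
          rw [Finset.sum_mul, ← Finset.sum_add_distrib]
          apply Finset.sum_congr rfl
          intro ys _
          ring
    _ = (∑ ys : (t : Fin T) → Fin (N' t), (∏ s, pbar s jstar (ys s)) *
          (Real.log (pbar t jstar (ys t)) -
            Real.log (∑ j, (w ys t.1 j / ∑ i, w ys t.1 i) * pbar t j (ys t)))) + β := by
          rw [hkey3 t, hPsum, one_mul]
  have hnoise : ∑ ys : (t : Fin T) → Fin (N' t), (∏ s, pbar s jstar (ys s)) *
      (∑ t : Fin T, ∑ j, (w ys t.1 j / ∑ i, w ys t.1 i) * Lap t j)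
      = ∑ t : Fin T, ∑ j : Fin K,
          (∑ ys : (t : Fin T) → Fin (N' t), (∏ s, pbar s jstar (ys s)) *
            (w ys t.1 j / ∑ i : Fin K, w ys t.1 i)) * Lap t j := by
    rw [swap (fun ys t => ∑ j, (w ys t.1 j / ∑ i, w ys t.1 i) * Lap t j)]
    apply Finset.sum_congr rfl
    intro t _
    calc ∑ ys : (t : Fin T) → Fin (N' t), (∏ s, pbar s jstar (ys s)) *
        (∑ j, (w ys t.1 j / ∑ i, w ys t.1 i) * Lap t j)
        = ∑ ys : (t : Fin T) → Fin (N' t), ∑ j,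
            (∏ s, pbar s jstar (ys s)) * ((w ys t.1 j / ∑ i, w ys t.1 i) * Lap t j) := by
          apply Finset.sum_congr rfl
          intro ys _
          rw [Finset.mul_sum]
    _ = ∑ j, ∑ ys : (t : Fin T) → Fin (N' t),
            (∏ s, pbar s jstar (ys s)) * ((w ys t.1 j / ∑ i, w ys t.1 i) * Lap t j) :=
          Finset.sum_comm
    _ = ∑ j : Fin K, (∑ ys : (t : Fin T) → Fin (N' t), (∏ s, pbar s jstar (ys s)) *
            (w ys t.1 j / ∑ i : Fin K, w ys t.1 i)) * Lap t j := by
          apply Finset.sum_congr rfl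
          intro j _
          rw [Finset.sum_mul]
          apply Finset.sum_congr rfl
          intro ys _
          ring
  rw [swap (fun ys t => ∑ y : Fin M, F jstar (x t) y * Real.log (F jstar (x t) y /
    (∑ v ∈ S t y, ∑ j : Fin K, (w ys t.1 j / ∑ i : Fin K, w ys t.1 i) * pbar t j v)))]
  have hTβ : ∑ _t : Fin T, β = (T:ℝ) * β := by
    rw [Finset.sum_const, Finset.card_univ, Fintype.card_fin, nsmul_eq_mul]
  calc ∑ t : Fin T, ∑ ys : (t : Fin T) → Fin (N' t), (∏ s, pbar s jstar (ys s)) *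
      (∑ y : Fin M, F jstar (x t) y * Real.log (F jstar (x t) y /
        (∑ v ∈ S t y, ∑ j : Fin K, (w ys t.1 j / ∑ i : Fin K, w ys t.1 i) * pbar t j v)))
      ≤ ∑ t : Fin T, ((∑ ys : (t : Fin T) → Fin (N' t), (∏ s, pbar s jstar (ys s)) *
          (Real.log (pbar t jstar (ys t)) -
            Real.log (∑ j, (w ys t.1 j / ∑ i, w ys t.1 i) * pbar t j (ys t)))) + β) :=
      Finset.sum_le_sum (fun t _ => step2 t)
  _ = (∑ ys : (t : Fin T) → Fin (N' t), (∏ s, pbar s jstar (ys s)) *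
        (∑ t : Fin T, (Real.log (pbar t jstar (ys t)) -
          Real.log (∑ j, (w ys t.1 j / ∑ i, w ys t.1 i) * pbar t j (ys t))))) + (T:ℝ) * β := by
      rw [Finset.sum_add_distrib, hTβ, swap (fun ys t => Real.log (pbar t jstar (ys t)) -
        Real.log (∑ j, (w ys t.1 j / ∑ i, w ys t.1 i) * pbar t j (ys t)))]
  _ ≤ (∑ ys : (t : Fin T) → Fin (N' t), (∏ s, pbar s jstar (ys s)) *
        ((1/c) * sq + (∑ t : Fin T, ∑ j, (w ys t.1 j / ∑ i, w ys t.1 i) * Lap t j) -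
          ∑ t : Fin T, Lap t jstar)) + (T:ℝ) * β := by
      apply add_le_add_left
      exact Finset.sum_le_sum (fun ys _ =>
        mul_le_mul_of_nonneg_left (hpath ys) (hPnn ys))
  _ = ((1/c) * sq - ∑ t : Fin T, Lap t jstar) +
        (∑ ys : (t : Fin T) → Fin (N' t), (∏ s, pbar s jstar (ys s)) *
          (∑ t : Fin T, ∑ j, (w ys t.1 j / ∑ i, w ys t.1 i) * Lap t j)) + (T:ℝ) * β := by
      have e1 : ∑ ys : (t : Fin T) → Fin (N' t), (∏ s, pbar s jstar (ys s)) *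
          ((1/c) * sq + (∑ t : Fin T, ∑ j, (w ys t.1 j / ∑ i, w ys t.1 i) * Lap t j) -
            ∑ t : Fin T, Lap t jstar)
          = (∑ ys : (t : Fin T) → Fin (N' t), (∏ s, pbar s jstar (ys s))) *
              ((1/c) * sq - ∑ t : Fin T, Lap t jstar) +
            (∑ ys : (t : Fin T) → Fin (N' t), (∏ s, pbar s jstar (ys s)) *
              (∑ t : Fin T, ∑ j, (w ys t.1 j / ∑ i, w ys t.1 i) * Lap t j)) := by
        rw [Finset.sum_mul, ← Finset.sum_add_distrib]
        apply Finset.sum_congr rfl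
        intro ys _
        ring
      rw [e1, hPsum, one_mul]
  _ = ((1/c) * sq - ∑ t : Fin T, Lap t jstar) +
        (∑ t : Fin T, ∑ j : Fin K,
          (∑ ys : (t : Fin T) → Fin (N' t), (∏ s, pbar s jstar (ys s)) *
            (w ys t.1 j / ∑ i : Fin K, w ys t.1 i)) * Lap t j) + (T:ℝ) * β := by
      rw [hnoise]
  _ ≤ (1 / c) * sq + 3 * Real.log ((K : ℝ) * T) +
        (∑ t : Fin T, ∑ j : Fin K,
          (∑ ys : (t : Fin T) → Fin (N' t), (∏ t', pbar t' jstar (ys t')) *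
            (w ys t.1 j / ∑ i : Fin K, w ys t.1 i)) * Lap t j) -
        ∑ t : Fin T, Lap t jstar := by
      have h10 : ((1/c) * sq - ∑ t : Fin T, Lap t jstar) +
          (∑ t : Fin T, ∑ j : Fin K,
            (∑ ys : (t : Fin T) → Fin (N' t), (∏ s, pbar s jstar (ys s)) *
              (w ys t.1 j / ∑ i : Fin K, w ys t.1 i)) * Lap t j) + (T:ℝ) * β ≤
          ((1/c) * sq - ∑ t : Fin T, Lap t jstar) +
          (∑ t : Fin T, ∑ j : Fin K,
            (∑ ys : (t : Fin T) → Fin (N' t), (∏ s, pbar s jstar (ys s)) *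
              (w ys t.1 j / ∑ i : Fin K, w ys t.1 i)) * Lap t j) +
          3 * Real.log ((K:ℝ)*T) := by
        linarith [hbudget]
      refine le_trans h10 (le_of_eq ?_)
      ring

/-- **Key risk bound for Algorithm 1 (locally privatized WMA), conditionally on bounded
Laplace noise.**  With Laplace scale `b = (2√(2K ln(1/δ)) + √(Kε))·log(KT)/ε`, threshold
`c' = b·(γ + log K + log T)` and normalization `c = 1/(log(KT) + 2c')`:
(a) the i.i.d. Laplace noises `Lap t j` all lie in `[−c', c']` with probability at least
`1 − e^{−γ}`, and (b) for any fixed noise values with `|Lap t j| ≤ c'`, the predictions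
`p̂ t` of Algorithm 1 (weighted-majority over the clipped distributions `p̄ t j`, with
privatized losses `Ỹ t j = −c·(log p̄ t j (Y' t) + Lap t j + log M − c')` and weights
`w (t+1) j = w t j · e^{−η Ỹ t j}`, `η = √(2 log K / T)`) satisfy
`E_{Y'^T}[∑_t KL(f j* (x t), p̂ t)] ≤ (1/c)·√(2T log K) + 3 log(KT)
  + ∑_{t,j} E_{Y'^T}[w̃ t j]·Lap t j − ∑_t Lap t j*`,
the expectation being the finite average over the trajectories `ys` of the clipped labels
`Y' t ∼ p̄ t j* `, with density `∏_t p̄ t j* (ys t)`. -/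
theorem algorithm1_conditional_risk_bound
    (X : Type*) (M K T : ℕ) (hK : 2 ≤ K) (hM : 1 ≤ M) (hT : Real.log K < T)
    (ε δ γ : ℝ) (hε : 0 < ε) (hδ : δ ∈ Set.Ioo (0 : ℝ) 1) (hγ : 0 < γ)
    (b c' c : ℝ)
    (hb : b = (2 * Real.sqrt (2 * K * Real.log (1 / δ)) + Real.sqrt (K * ε)) *
      Real.log ((K : ℝ) * T) / ε)
    (hc' : c' = b * (γ + Real.log K + Real.log T))
    (hc : c = 1 / (Real.log ((K : ℝ) * T) + 2 * c'))
    (F : Fin K → X → Fin M → ℝ) (hF : ∀ j x, IsDist (F j x))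
    (x : Fin T → X) (jstar : Fin K)
    (N' : Fin T → ℕ)
    (S : (t : Fin T) → Fin M → Finset (Fin (N' t)))
    (hScard : ∀ t y, (S t y).card = ⌈(M : ℝ) * ⨆ j, F j (x t) y⌉₊)
    (hSdisj : ∀ t (y y' : Fin M), y ≠ y' → Disjoint (S t y) (S t y'))
    (hScover : ∀ t (v : Fin (N' t)), ∃ y, v ∈ S t y)
    (pbar : (t : Fin T) → Fin K → Fin (N' t) → ℝ)
    (hpbar : ∀ t j y v, v ∈ S t y →
      pbar t j v = (1 - 1 / (T : ℝ)) * F j (x t) y / (S t y).card +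
        1 / ((T : ℝ) * N' t))
    (hclip : ∀ t j v, 1 / ((T : ℝ) * K * M) ≤ pbar t j v ∧ pbar t j v ≤ 1 / (M : ℝ))
    (η : ℝ) (hη : η = Real.sqrt (2 * Real.log K / T)) :
    -- (a) the noise is uniformly bounded by `c'` with probability at least `1 − e^{−γ}`
    (1 : ℝ≥0∞) - ENNReal.ofReal (Real.exp (-γ)) ≤
      (Measure.pi fun _ : Fin T × Fin K => laplaceMeasure b)
        {L : Fin T × Fin K → ℝ | ∀ p, |L p| ≤ c'} ∧
    -- (b) conditionally on that event, the expected cumulative KL-risk bound holds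
    ∀ (Lap : Fin T → Fin K → ℝ), (∀ t j, |Lap t j| ≤ c') →
      ∀ (w : ((t : Fin T) → Fin (N' t)) → ℕ → Fin K → ℝ),
        (∀ ys j, w ys 0 j = 1) →
        (∀ ys (t : Fin T) (j : Fin K),
          w ys (t.1 + 1) j = w ys t.1 j *
            Real.exp (-η * (-c * (Real.log (pbar t j (ys t)) + Lap t j +
              Real.log (M : ℝ) - c')))) →
        (∑ ys : (t : Fin T) → Fin (N' t),
            (∏ t, pbar t jstar (ys t)) *
              (∑ t : Fin T, ∑ y : Fin M,
                F jstar (x t) y *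
                  Real.log (F jstar (x t) y /
                    (∑ v ∈ S t y, ∑ j : Fin K,
                      (w ys t.1 j / ∑ i : Fin K, w ys t.1 i) * pbar t j v))))
          ≤ (1 / c) * Real.sqrt (2 * T * Real.log K) + 3 * Real.log ((K : ℝ) * T) +
            (∑ t : Fin T, ∑ j : Fin K,
              (∑ ys : (t : Fin T) → Fin (N' t),
                  (∏ t', pbar t' jstar (ys t')) *
                    (w ys t.1 j / ∑ i : Fin K, w ys t.1 i)) * Lap t j) -
            ∑ t : Fin T, Lap t jstar := by
  constructor
  · -- part (a)
    have hlogK : 0 < Real.log K := Real.log_pos (by exact_mod_cast hK)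
    have hTRpos : (0:ℝ) < T := lt_trans hlogK hT
    have hT1 : 1 ≤ T := by exact_mod_cast hTRpos
    have hK1 : 1 ≤ K := by omega
    have hKpos : (0:ℝ) < K := by positivity
    have hTR1 : (1:ℝ) ≤ T := by exact_mod_cast hT1
    have hKR : (2:ℝ) ≤ K := by exact_mod_cast hK
    have hlogKT : 0 < Real.log ((K:ℝ)*T) := Real.log_pos (by nlinarith)
    have hbpos : 0 < b := by
      rw [hb]
      apply div_pos _ hε
      apply mul_pos _ hlogKT
      have h1 : 0 < Real.sqrt ((K:ℝ) * ε) := Real.sqrt_pos.mpr (by positivity)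
      have h2 : 0 ≤ Real.sqrt (2 * K * Real.log (1/δ)) := Real.sqrt_nonneg _
      linarith
    exact part_a T K hT1 hK1 b c' γ hbpos hγ hc'
  · -- part (b)
    intro Lap hLap w hw0 hwrec
    have hlogK : 0 < Real.log K := Real.log_pos (by exact_mod_cast hK)
    have hTRpos : (0:ℝ) < T := lt_trans hlogK hT
    have hT1 : 1 ≤ T := by exact_mod_cast hTRpos
    have hK1 : 1 ≤ K := by omega
    have hKpos : (0:ℝ) < K := by positivity
    have hTR1 : (1:ℝ) ≤ T := by exact_mod_cast hT1
    have hKR : (2:ℝ) ≤ K := by exact_mod_cast hK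
    have hlogKT : 0 < Real.log ((K:ℝ)*T) := Real.log_pos (by nlinarith)
    have hbpos : 0 < b := by
      rw [hb]
      apply div_pos _ hε
      apply mul_pos _ hlogKT
      have h1 : 0 < Real.sqrt ((K:ℝ) * ε) := Real.sqrt_pos.mpr (by positivity)
      have h2 : 0 ≤ Real.sqrt (2 * K * Real.log (1/δ)) := Real.sqrt_nonneg _
      linarith
    have hc'pos : 0 < c' := by
      rw [hc']
      apply mul_pos hbpos
      have hlogT : 0 ≤ Real.log T := Real.log_nonneg hTR1
      linarith
    exact part_b X M K T hK hM hT c' c hc'pos hc F hF x jstar N' S hScard hSdisj hScover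
      pbar hpbar hclip η hη Lap hLap w hw0 hwrec
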